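/- The number of 231-avoiding permutations of [n] all of whose cycles have length exactly 3 is 0 when 3 does not divide n, and 3^{(n/3)-1} when n ≥ 3 is divisible by 3. -/

import Mathlib

def Avoids231 {n : ℕ} (π : Equiv.Perm (Fin n)) : Prop :=
  ¬ ∃ i j k : Fin n, i < j ∧ j < k ∧ π k < π i ∧ π i < π j

namespace C231

open Finset Equiv

/-- permutation as a plain ℕ function -/
def Q {n : ℕ} (π : Equiv.Perm (Fin n)) : ℕ → ℕ := fun v => if h : v < n then (π ⟨v, h⟩).1 else v

lemma Q_lt {n : ℕ} (π : Equiv.Perm (Fin n)) {v : ℕ} (h : v < n) : Q π v < n := by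
  simp [Q, h]

lemma Q_inj {n : ℕ} (π : Equiv.Perm (Fin n)) {u v : ℕ} (hu : u < n) (hv : v < n)
    (h : Q π u = Q π v) : u = v := by
  simp only [Q, dif_pos hu, dif_pos hv] at h
  have := π.injective (Fin.ext h)
  exact congrArg Fin.val this

lemma Q_apply {n : ℕ} (π : Equiv.Perm (Fin n)) (x : Fin n) : Q π x.1 = (π x).1 := by
  simp [Q, x.2]

lemma Q_three {n : ℕ} {π : Equiv.Perm (Fin n)} (h3 : π ^ 3 = 1) {v : ℕ} (hv : v < n) :
    Q π (Q π (Q π v)) = v := by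
  have e1 : Q π v = (π ⟨v, hv⟩).1 := by simp [Q, hv]
  have e2 : Q π (Q π v) = (π (π ⟨v, hv⟩)).1 := by rw [e1, Q_apply]
  have e3 : Q π (Q π (Q π v)) = (π (π (π ⟨v, hv⟩))).1 := by rw [e2, Q_apply]
  have hfix : π (π (π ⟨v, hv⟩)) = ⟨v, hv⟩ := by
    have := congrFun (congrArg (fun e => e.toFun) h3) ⟨v, hv⟩
    simpa [pow_succ, Equiv.Perm.mul_apply] using this
  rw [e3, hfix]

lemma Q_ne {n : ℕ} {π : Equiv.Perm (Fin n)} (hfix : ∀ i, π i ≠ i) {v : ℕ} (hv : v < n) :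
    Q π v ≠ v := by
  simp only [Q, dif_pos hv]
  intro h
  exact hfix ⟨v, hv⟩ (Fin.ext h)

lemma Q_surj {n : ℕ} (π : Equiv.Perm (Fin n)) {w : ℕ} (hw : w < n) :
    ∃ v, v < n ∧ Q π v = w := by
  refine ⟨(π.symm ⟨w, hw⟩).1, (π.symm ⟨w, hw⟩).2, ?_⟩
  simp [Q, (π.symm ⟨w, hw⟩).2]

/-- 231-avoidance at ℕ level -/
lemma avoids_nat {n : ℕ} {π : Equiv.Perm (Fin n)} (h : Avoids231 π) :
    ∀ i j k, i < j → j < k → k < n → Q π k < Q π i → Q π i < Q π j → False := by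
  intro i j k hij hjk hk hki hij'
  have hj : j < n := hjk.trans hk
  have hi : i < n := hij.trans hj
  simp only [Q, dif_pos hi, dif_pos hj, dif_pos hk] at hki hij'
  exact h ⟨⟨i, hi⟩, ⟨j, hj⟩, ⟨k, hk⟩, hij, hjk, hki, hij'⟩

lemma avoids_of_nat {n : ℕ} {π : Equiv.Perm (Fin n)}
    (h : ∀ i j k, i < j → j < k → k < n → Q π k < Q π i → Q π i < Q π j → False) :
    Avoids231 π := by
  rintro ⟨i, j, k, hij, hjk, hki, hij'⟩
  refine h i.1 j.1 k.1 hij hjk k.2 ?_ ?_ <;>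
    simp only [Q, dif_pos i.2, dif_pos j.2, dif_pos k.2] <;>
    simpa using (by assumption : _)

/-- cardinality of an initial segment filter -/
lemma card_filter_lt (n c : ℕ) (hc : c ≤ n) :
    (Finset.univ.filter (fun x : Fin n => x.1 < c)).card = c := by
  have h : (Finset.univ.filter (fun x : Fin n => x.1 < c)).card = (Finset.range c).card := by
    apply Finset.card_bij (fun x _ => x.1)
    · intro a ha; simp only [Finset.mem_filter] at ha; simpa using ha.2
    · intro a ha b hb h; exact Fin.ext h
    · intro b hb
      simp only [Finset.mem_range] at hb
      exact ⟨⟨b, lt_of_lt_of_le hb hc⟩, by simp [hb], rfl⟩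
  rw [h, Finset.card_range]

/-- number of positions with value < c is c -/
lemma card_filter_Q_lt {n : ℕ} (π : Equiv.Perm (Fin n)) (c : ℕ) (hc : c ≤ n) :
    (Finset.univ.filter (fun x : Fin n => (π x).1 < c)).card = c := by
  have h : (Finset.univ.filter (fun x : Fin n => (π x).1 < c)).card
      = (Finset.univ.filter (fun x : Fin n => x.1 < c)).card := by
    apply Finset.card_bij (fun x _ => π x)
    · intro a ha; simp only [Finset.mem_filter] at ha ⊢; exact ⟨Finset.mem_univ _, ha.2⟩
    · intro a _ b _ h; exact π.injective h
    · intro b hb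
      simp only [Finset.mem_filter] at hb
      exact ⟨π.symm b, by simp [hb.2], by simp⟩
  rw [h, card_filter_lt n c hc]

/-- Split lemma: if π avoids 231 and π p = n-1, then positions before p have values < p. -/
lemma split_lemma {n : ℕ} {π : Equiv.Perm (Fin n)} (hav : Avoids231 π)
    {p : ℕ} (hp : p < n) (hmax : Q π p = n - 1) :
    ∀ i, i < p → Q π i < p := by
  intro i hip
  by_contra hge
  push_neg at hge
  have hi : i < n := hip.trans hp
  set c := Q π i with hc
  have hcn : c < n := Q_lt π hi
  have hcne : c ≠ n - 1 := by
    intro h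
    exact absurd (Q_inj π hi hp (h.trans hmax.symm)) (Nat.ne_of_lt hip)
  -- the set of positions with value < c
  set s := Finset.univ.filter (fun x : Fin n => (π x).1 < c) with hs
  have hcard : s.card = c := card_filter_Q_lt π c hcn.le
  -- claim s ⊆ positions < p minus {i}
  have hsub : s ⊆ (Finset.univ.filter (fun x : Fin n => x.1 < p)).erase ⟨i, hi⟩ := by
    intro x hx
    simp only [hs, Finset.mem_filter] at hx
    have hxv : Q π x.1 < c := by simpa [Q, x.2] using hx.2
    have hxi : x.1 ≠ i := by
      intro h; rw [h] at hxv; omega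
    have hxp : x.1 < p := by
      by_contra hxp
      push_neg at hxp
      have hxpne : x.1 ≠ p := by
        intro h
        rw [h, hmax] at hxv
        omega
      have hxgt : p < x.1 := lt_of_le_of_ne hxp (Ne.symm hxpne)
      exact avoids_nat hav i p x.1 hip hxgt x.2 hxv (by rw [hmax]; omega)
    rw [Finset.mem_erase]
    exact ⟨fun h => hxi (congrArg Fin.val h), by simp [hxp]⟩
  have hle : s.card ≤ p - 1 := by
    calc s.card ≤ ((Finset.univ.filter (fun x : Fin n => x.1 < p)).erase ⟨i, hi⟩).card :=
          Finset.card_le_card hsub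
      _ = p - 1 := by
          rw [Finset.card_erase_of_mem (by simp [hip]), card_filter_lt n p hp.le]
  omega

/-- Invariance converse: if positions < a map below a, then values < a come from positions < a -/
lemma inv_lemma {n : ℕ} (π : Equiv.Perm (Fin n)) {a : ℕ}
    (h : ∀ i, i < n → i < a → Q π i < a) :
    ∀ i, i < n → Q π i < a → i < a := by
  intro i hi hQ
  set s := Finset.univ.filter (fun x : Fin n => x.1 < a) with hs
  have himg : s.image π ⊆ s := by
    intro y hy
    simp only [hs, Finset.mem_image, Finset.mem_filter] at hy ⊢
    obtain ⟨x, hx, hxy⟩ := hy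
    refine ⟨Finset.mem_univ _, ?_⟩
    have := h x.1 x.2 hx.2
    simp only [Q, dif_pos x.2] at this
    rw [← hxy]
    simpa using this
  have hcard : (s.image π).card = s.card := Finset.card_image_of_injective _ π.injective
  have heq : s.image π = s := Finset.eq_of_subset_of_card_le himg (le_of_eq hcard.symm)
  have hmem : π ⟨i, hi⟩ ∈ s := by
    simp only [hs, Finset.mem_filter]
    refine ⟨Finset.mem_univ _, ?_⟩
    simpa [Q, dif_pos hi] using hQ
  rw [← heq] at hmem
  simp only [Finset.mem_image] at hmem
  obtain ⟨x, hx, hxe⟩ := hmem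
  have hxi := π.injective hxe
  rw [hxi] at hx
  simpa [hs] using (Finset.mem_filter.mp hx).2

/-! ### insertion machinery -/

def gv (a b v : ℕ) : ℕ := if v < a then v else if v + 1 < b then v + 1 else v + 2

def delv (a b x : ℕ) : ℕ := if x < a then x else if x < b then x - 1 else x - 2

def Fv (N a b : ℕ) (q : ℕ → ℕ) (x : ℕ) : ℕ :=
  if x = a then N + 2 else if x = b then a else if x = N + 2 then b
  else gv a b (q (delv a b x))

section Ext

variable {N a b : ℕ}

lemma gv_lt (hab : a < b) (hbN : b ≤ N + 1) {v : ℕ} (hv : v < N) : gv a b v < N + 2 := by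
  simp only [gv]; split_ifs <;> omega

lemma gv_ne_a (hab : a < b) {v : ℕ} : gv a b v ≠ a := by
  simp only [gv]; split_ifs <;> omega

lemma gv_ne_b (hab : a < b) {v : ℕ} : gv a b v ≠ b := by
  simp only [gv]; split_ifs <;> omega

lemma gv_mono_iff (hab : a < b) {u v : ℕ} : gv a b u < gv a b v ↔ u < v := by
  simp only [gv]; split_ifs <;> omega

lemma gv_lt_a_iff (hab : a < b) {v : ℕ} : gv a b v < a ↔ v < a := by
  simp only [gv]; split_ifs <;> omega

lemma gv_gt_a_iff (hab : a < b) {v : ℕ} : a < gv a b v ↔ a ≤ v := by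
  simp only [gv]; split_ifs <;> omega

lemma gv_gt_b_iff (hab : a < b) {v : ℕ} : b < gv a b v ↔ b ≤ v + 1 := by
  simp only [gv]; split_ifs <;> omega

lemma delv_gv (hab : a < b) {v : ℕ} : delv a b (gv a b v) = v := by
  simp only [gv, delv]; split_ifs <;> omega

lemma gv_delv (hab : a < b) {x : ℕ} (h1 : x ≠ a) (h2 : x ≠ b) :
    gv a b (delv a b x) = x := by
  simp only [gv, delv]; split_ifs <;> omega

lemma delv_lt (hab : a < b) (hbN : b ≤ N + 1) {x : ℕ} (hx : x < N + 3)
    (h1 : x ≠ a) (h2 : x ≠ b) (h3 : x ≠ N + 2) : delv a b x < N := by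
  simp only [delv]; split_ifs <;> omega

lemma delv_mono (hab : a < b) {x y : ℕ} (hxy : x < y)
    (hxa : x ≠ a) (hxb : x ≠ b) (hya : y ≠ a) (hyb : y ≠ b) :
    delv a b x < delv a b y := by
  simp only [delv]; split_ifs <;> omega

lemma delv_ge_a (hab : a < b) {x : ℕ} (hx : a < x) (hxb : x ≠ b) : a ≤ delv a b x := by
  simp only [delv]; split_ifs <;> omega

lemma delv_b_bound (hab : a < b) {x : ℕ} (hx : x < b) (hxa : x ≠ a) :
    delv a b x + 2 ≤ b := by
  simp only [delv]; split_ifs <;> omega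

lemma delv_of_lt_a {x : ℕ} (hx : x < a) : delv a b x = x := by
  simp only [delv]; split_ifs <;> omega

variable {ρ : Equiv.Perm (Fin N)}

/-- the three insertion conditions -/
def CondA (N a : ℕ) (q : ℕ → ℕ) : Prop := ∀ i, i < N → i < a → q i < a
def CondB (N b : ℕ) (q : ℕ → ℕ) : Prop :=
  ∀ i j, i < j → j < N → b ≤ q i + 1 → q i < q j → False
def CondG (N a b : ℕ) (q : ℕ → ℕ) : Prop :=
  ∀ i j, i < j → j < N → j + 2 ≤ b → a ≤ q i → q i < q j → False

lemma Fv_lt (hab : a < b) (hbN : b ≤ N + 1) {x : ℕ} (hx : x < N + 3) :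
    Fv N a b (Q ρ) x < N + 3 := by
  simp only [Fv]
  split_ifs with h1 h2 h3
  · omega
  · omega
  · omega
  · have hd : delv a b x < N := delv_lt hab hbN hx h1 h2 h3
    have := gv_lt hab hbN (Q_lt ρ hd) (a := a) (b := b)
    omega

lemma Fv_base (hab : a < b) {x : ℕ} (h1 : x ≠ a) (h2 : x ≠ b) (h3 : x ≠ N + 2) :
    Fv N a b (Q ρ) x = gv a b (Q ρ (delv a b x)) := by
  simp only [Fv, if_neg h1, if_neg h2, if_neg h3]

lemma Fv_three (hab : a < b) (hbN : b ≤ N + 1) (h3 : ρ ^ 3 = 1) {x : ℕ} (hx : x < N + 3) :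
    Fv N a b (Q ρ) (Fv N a b (Q ρ) (Fv N a b (Q ρ) x)) = x := by
  have ea : Fv N a b (Q ρ) a = N + 2 := by simp [Fv]
  have et : Fv N a b (Q ρ) (N + 2) = b := by
    simp only [Fv]; split_ifs <;> omega
  have eb : Fv N a b (Q ρ) b = a := by
    simp only [Fv]; split_ifs <;> omega
  by_cases hxa : x = a
  · rw [hxa, ea, et, eb]
  by_cases hxb : x = b
  · rw [hxb, eb, ea, et]
  by_cases hxt : x = N + 2
  · rw [hxt, et, eb, ea]
  · have hd : delv a b x < N := delv_lt hab hbN hx hxa hxb hxt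
    have hq1 : Q ρ (delv a b x) < N := Q_lt ρ hd
    have e1 : Fv N a b (Q ρ) x = gv a b (Q ρ (delv a b x)) := Fv_base hab hxa hxb hxt
    have hg1a : gv a b (Q ρ (delv a b x)) ≠ a := gv_ne_a hab
    have hg1b : gv a b (Q ρ (delv a b x)) ≠ b := gv_ne_b hab
    have hg1t : gv a b (Q ρ (delv a b x)) ≠ N + 2 := by
      have := gv_lt hab hbN hq1 (a := a) (b := b); omega
    have e2 : Fv N a b (Q ρ) (gv a b (Q ρ (delv a b x)))
        = gv a b (Q ρ (Q ρ (delv a b x))) := by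
      rw [Fv_base hab hg1a hg1b hg1t, delv_gv hab]
    have hq2 : Q ρ (Q ρ (delv a b x)) < N := Q_lt ρ hq1
    have hg2a : gv a b (Q ρ (Q ρ (delv a b x))) ≠ a := gv_ne_a hab
    have hg2b : gv a b (Q ρ (Q ρ (delv a b x))) ≠ b := gv_ne_b hab
    have hg2t : gv a b (Q ρ (Q ρ (delv a b x))) ≠ N + 2 := by
      have := gv_lt hab hbN hq2 (a := a) (b := b); omega
    have e3 : Fv N a b (Q ρ) (gv a b (Q ρ (Q ρ (delv a b x))))
        = gv a b (Q ρ (Q ρ (Q ρ (delv a b x)))) := by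
      rw [Fv_base hab hg2a hg2b hg2t, delv_gv hab]
    rw [e1, e2, e3, Q_three h3 hd, gv_delv hab hxa hxb]

/-- the extension permutation -/
noncomputable def Eperm (N a b : ℕ) (ρ : Equiv.Perm (Fin N)) (hab : a < b) (hbN : b ≤ N + 1)
    (h3 : ρ ^ 3 = 1) : Equiv.Perm (Fin (N + 3)) :=
  Equiv.ofBijective (fun x => ⟨Fv N a b (Q ρ) x.1, Fv_lt hab hbN x.2⟩)
    (by
      have hli : Function.LeftInverse
          (fun x : Fin (N+3) => ⟨Fv N a b (Q ρ) (Fv N a b (Q ρ) x.1),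
            Fv_lt hab hbN (Fv_lt hab hbN x.2)⟩)
          (fun x : Fin (N+3) => (⟨Fv N a b (Q ρ) x.1, Fv_lt hab hbN x.2⟩ : Fin (N+3))) := by
        intro x
        exact Fin.ext (Fv_three hab hbN h3 x.2)
      have hri : Function.RightInverse
          (fun x : Fin (N+3) => ⟨Fv N a b (Q ρ) (Fv N a b (Q ρ) x.1),
            Fv_lt hab hbN (Fv_lt hab hbN x.2)⟩)
          (fun x : Fin (N+3) => (⟨Fv N a b (Q ρ) x.1, Fv_lt hab hbN x.2⟩ : Fin (N+3))) := by
        intro x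
        exact Fin.ext (Fv_three hab hbN h3 x.2)
      exact ⟨hli.injective, hri.surjective⟩)

lemma Q_Eperm (hab : a < b) (hbN : b ≤ N + 1) (h3 : ρ ^ 3 = 1) {x : ℕ} (hx : x < N + 3) :
    Q (Eperm N a b ρ hab hbN h3) x = Fv N a b (Q ρ) x := by
  simp only [Q, dif_pos hx]
  rfl

lemma Eperm_pow3 (hab : a < b) (hbN : b ≤ N + 1) (h3 : ρ ^ 3 = 1) :
    (Eperm N a b ρ hab hbN h3) ^ 3 = 1 := by
  ext x
  have : ∀ y : Fin (N+3), (Eperm N a b ρ hab hbN h3) y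
      = ⟨Fv N a b (Q ρ) y.1, Fv_lt hab hbN y.2⟩ := fun y => rfl
  simp only [pow_succ, pow_zero, one_mul, Equiv.Perm.mul_apply, Equiv.Perm.one_apply, this]
  exact Fv_three hab hbN h3 x.2

lemma Eperm_fix (hab : a < b) (hbN : b ≤ N + 1) (h3 : ρ ^ 3 = 1)
    (hfix : ∀ i, ρ i ≠ i) : ∀ i, (Eperm N a b ρ hab hbN h3) i ≠ i := by
  intro x hx
  have hx' : Fv N a b (Q ρ) x.1 = x.1 := congrArg Fin.val hx
  by_cases h1 : x.1 = a
  · simp only [Fv, if_pos h1] at hx'; omega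
  by_cases h2 : x.1 = b
  · simp only [Fv, if_neg (by omega : x.1 ≠ a), if_pos h2] at hx'; omega
  by_cases ht : x.1 = N + 2
  · simp only [Fv, if_neg h1, if_neg h2, if_pos ht] at hx'; omega
  · rw [Fv_base hab h1 h2 ht] at hx'
    have hd : delv a b x.1 < N := delv_lt hab hbN x.2 h1 h2 ht
    have : Q ρ (delv a b x.1) = delv a b x.1 := by
      have := congrArg (delv a b) hx'
      rwa [delv_gv hab] at this
    exact Q_ne hfix hd this

lemma Eperm_avoids (hab : a < b) (hbN : b ≤ N + 1) (h3 : ρ ^ 3 = 1)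
    (hav : Avoids231 ρ)
    (hA : CondA N a (Q ρ)) (hB : CondB N b (Q ρ)) (hG : CondG N a b (Q ρ)) :
    Avoids231 (Eperm N a b ρ hab hbN h3) := by
  apply avoids_of_nat
  intro i j k hij hjk hk hki hij'
  have hj : j < N + 3 := hjk.trans hk
  have hi : i < N + 3 := hij.trans hj
  rw [Q_Eperm hab hbN h3 hi, Q_Eperm hab hbN h3 hk] at hki
  rw [Q_Eperm hab hbN h3 hi, Q_Eperm hab hbN h3 hj] at hij'
  set F := Fv N a b (Q ρ) with hF
  -- global bound
  have hFbound : ∀ x, x < N + 3 → F x < N + 3 := fun x hx => Fv_lt hab hbN hx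
  -- case i = a
  by_cases hia : i = a
  · have : F i = N + 2 := by simp [hF, Fv, hia]
    have := hFbound j hj; omega
  by_cases hka : k = a
  · have : F k = N + 2 := by simp [hF, Fv, hka]
    have h1 := hFbound i hi
    have h2 := hFbound j hj
    omega
  by_cases hja : j = a
  · -- i < a, i base
    have hia' : i < a := by omega
    have hib : i ≠ b := by omega
    have hit : i ≠ N + 2 := by omega
    have hFi : F i = Q ρ i := by
      rw [hF, Fv_base hab hia hib hit, delv_of_lt_a hia']
      have hQ : Q ρ i < a := hA i (by
        have : a < b := hab
        have : i < N := by omega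
        exact this) hia'
      simp only [gv, if_pos hQ]
    have hQia : Q ρ i < a := hA i (by omega) hia'
    -- k cases
    by_cases hkb : k = b
    · have : F k = a := by
        simp only [hF, Fv]; rw [if_neg hka, if_pos hkb]
      omega
    by_cases hkt : k = N + 2
    · have : F k = b := by
        simp only [hF, Fv]; rw [if_neg hka, if_neg hkb, if_pos hkt]
      omega
    · have hFk : F k = gv a b (Q ρ (delv a b k)) := Fv_base hab hka hkb hkt
      have hdk : delv a b k < N := delv_lt hab hbN hk hka hkb hkt
      have hklta : Q ρ (delv a b k) < a := by
        rw [hFk] at hki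
        rw [← gv_lt_a_iff hab (v := Q ρ (delv a b k))]
        omega
      have : delv a b k < a := inv_lemma ρ hA _ hdk hklta
      have : a ≤ delv a b k := delv_ge_a hab (by omega) hkb
      omega
  -- now a ∉ {i,j,k}
  by_cases hkb : k = b
  · -- i, j base, apply hG
    have hjb : j ≠ b := by omega
    have hjt : j ≠ N + 2 := by omega
    have hib : i ≠ b := by omega
    have hit : i ≠ N + 2 := by omega
    have hFk : F k = a := by simp only [hF, Fv]; rw [if_neg hka, if_pos hkb]
    have hFi : F i = gv a b (Q ρ (delv a b i)) := Fv_base hab hia hib hit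
    have hFj : F j = gv a b (Q ρ (delv a b j)) := Fv_base hab hja hjb hjt
    have hdi : delv a b i < N := delv_lt hab hbN hi hia hib hit
    have hdj : delv a b j < N := delv_lt hab hbN hj hja hjb hjt
    have hvi : a ≤ Q ρ (delv a b i) := by
      rw [← gv_gt_a_iff hab (v := Q ρ (delv a b i))]
      omega
    have hvij : Q ρ (delv a b i) < Q ρ (delv a b j) := by
      rw [← gv_mono_iff hab (a := a) (b := b)]
      omega
    exact hG (delv a b i) (delv a b j) (delv_mono hab hij hia hib hja hjb) hdj
      (delv_b_bound hab (by omega) hja) hvi hvij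
  by_cases hib : i = b
  · have hFi : F i = a := by simp only [hF, Fv]; rw [if_neg hia, if_pos hib]
    by_cases hkt : k = N + 2
    · have : F k = b := by simp only [hF, Fv]; rw [if_neg hka, if_neg hkb, if_pos hkt]
      omega
    · have hFk : F k = gv a b (Q ρ (delv a b k)) := Fv_base hab hka hkb hkt
      have hdk : delv a b k < N := delv_lt hab hbN hk hka hkb hkt
      have hklta : Q ρ (delv a b k) < a := by
        rw [← gv_lt_a_iff hab (v := Q ρ (delv a b k))]; omega
      have h1 : delv a b k < a := inv_lemma ρ hA _ hdk hklta
      have h2 : a ≤ delv a b k := delv_ge_a hab (by omega) hkb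
      omega
  by_cases hjb : j = b
  · have hFj : F j = a := by simp only [hF, Fv]; rw [if_neg hja, if_pos hjb]
    by_cases hkt : k = N + 2
    · have : F k = b := by simp only [hF, Fv]; rw [if_neg hka, if_neg hkb, if_pos hkt]
      omega
    · have hFk : F k = gv a b (Q ρ (delv a b k)) := Fv_base hab hka hkb hkt
      have hdk : delv a b k < N := delv_lt hab hbN hk hka hkb hkt
      have hklta : Q ρ (delv a b k) < a := by
        rw [← gv_lt_a_iff hab (v := Q ρ (delv a b k))]; omega
      have h1 : delv a b k < a := inv_lemma ρ hA _ hdk hklta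
      have h2 : a ≤ delv a b k := delv_ge_a hab (by omega) hkb
      omega
  -- now b ∉ {i,j,k}
  by_cases hkt : k = N + 2
  · have hit : i ≠ N + 2 := by omega
    have hjt : j ≠ N + 2 := by omega
    have hFk : F k = b := by simp only [hF, Fv]; rw [if_neg hka, if_neg hkb, if_pos hkt]
    have hFi : F i = gv a b (Q ρ (delv a b i)) := Fv_base hab hia hib hit
    have hFj : F j = gv a b (Q ρ (delv a b j)) := Fv_base hab hja hjb hjt
    have hdi : delv a b i < N := delv_lt hab hbN hi hia hib hit
    have hdj : delv a b j < N := delv_lt hab hbN hj hja hjb hjt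
    have hvi : b ≤ Q ρ (delv a b i) + 1 := by
      rw [← gv_gt_b_iff hab (v := Q ρ (delv a b i))]; omega
    have hvij : Q ρ (delv a b i) < Q ρ (delv a b j) := by
      rw [← gv_mono_iff hab (a := a) (b := b)]; omega
    exact hB (delv a b i) (delv a b j) (delv_mono hab hij hia hib hja hjb) hdj hvi hvij
  · -- all base
    have hit : i ≠ N + 2 := by omega
    have hjt : j ≠ N + 2 := by omega
    have hFi : F i = gv a b (Q ρ (delv a b i)) := Fv_base hab hia hib hit
    have hFj : F j = gv a b (Q ρ (delv a b j)) := Fv_base hab hja hjb hjt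
    have hFk : F k = gv a b (Q ρ (delv a b k)) := Fv_base hab hka hkb hkt
    have hdi : delv a b i < N := delv_lt hab hbN hi hia hib hit
    have hdj : delv a b j < N := delv_lt hab hbN hj hja hjb hjt
    have hdk : delv a b k < N := delv_lt hab hbN hk hka hkb hkt
    have h1 : Q ρ (delv a b k) < Q ρ (delv a b i) := by
      rw [← gv_mono_iff hab (a := a) (b := b)]; omega
    have h2 : Q ρ (delv a b i) < Q ρ (delv a b j) := by
      rw [← gv_mono_iff hab (a := a) (b := b)]; omega
    exact avoids_nat hav (delv a b i) (delv a b j) (delv a b k)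
      (delv_mono hab hij hia hib hja hjb) (delv_mono hab hjk hja hjb hka hkb) hdk h1 h2

end Ext

/-! ### removal -/

section Rem

variable {N : ℕ} (π : Equiv.Perm (Fin (N + 3)))

def bN : ℕ := Q π (N + 2)
def aN : ℕ := Q π (bN π)

lemma bN_lt3 : bN π < N + 3 := Q_lt π (by omega)
lemma aN_lt3 : aN π < N + 3 := Q_lt π (bN_lt3 π)

lemma bN_lt (hfix : ∀ i, π i ≠ i) : bN π < N + 2 := by
  have h1 := bN_lt3 π
  have h2 := Q_ne hfix (show N + 2 < N + 3 by omega)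
  simp only [bN] at *
  omega

lemma QaN (h3 : π ^ 3 = 1) : Q π (aN π) = N + 2 := by
  have := Q_three h3 (show N + 2 < N + 3 by omega)
  simpa [bN, aN] using this

lemma aN_ne_bN (hfix : ∀ i, π i ≠ i) : aN π ≠ bN π := by
  intro h
  exact Q_ne hfix (bN_lt3 π) (by simpa [aN] using h)

lemma aN_lt (h3 : π ^ 3 = 1) (hfix : ∀ i, π i ≠ i) : aN π < N + 2 := by
  have h1 := aN_lt3 π
  have h2 : aN π ≠ N + 2 := by
    intro h
    have hq := QaN π h3
    rw [h] at hq
    exact Q_ne hfix (show N + 2 < N + 3 by omega) hq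
  omega

lemma aN_lt_bN (h3 : π ^ 3 = 1) (hfix : ∀ i, π i ≠ i) (hav : Avoids231 π) : aN π < bN π := by
  rcases lt_or_ge (aN π) (bN π) with h | h
  · exact h
  have hne := aN_ne_bN π hfix
  have hlt : bN π < aN π := lt_of_le_of_ne h (Ne.symm hne)
  exfalso
  refine avoids_nat hav (bN π) (aN π) (N + 2) hlt (aN_lt π h3 hfix) (by omega) ?_ ?_
  · show Q π (N + 2) < Q π (bN π)
    simpa [bN, aN] using hlt
  · show Q π (bN π) < Q π (aN π)
    rw [QaN π h3]
    exact aN_lt π h3 hfix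

lemma condA_pi (h3 : π ^ 3 = 1) (hav : Avoids231 π) : CondA (N + 3) (aN π) (Q π) := by
  intro i hi hia
  exact split_lemma hav (aN_lt3 π) (by simpa using QaN π h3) i hia

/-- value of π at a base point stays in the base -/
lemma base_closed (h3 : π ^ 3 = 1) {x : ℕ} (hx : x < N + 3) (h1 : x ≠ aN π) (h2 : x ≠ bN π) (h3' : x ≠ N + 2) :
    Q π x ≠ aN π ∧ Q π x ≠ bN π ∧ Q π x ≠ N + 2 := by
  refine ⟨fun h => h2 ?_, fun h => h3' ?_, fun h => h1 ?_⟩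
  · exact Q_inj π hx (bN_lt3 π) (h.trans rfl)
  · exact Q_inj π hx (by omega) (h.trans rfl)
  · exact Q_inj π hx (aN_lt3 π) (h.trans (QaN π h3).symm)

/-- the removed base permutation, ℕ level -/
def Rv (x : ℕ) : ℕ := delv (aN π) (bN π) (Q π (gv (aN π) (bN π) x))

lemma gv_base (h3 : π ^ 3 = 1) (hfix : ∀ i, π i ≠ i) (hav : Avoids231 π) {i : ℕ} (hi : i < N) :
    gv (aN π) (bN π) i < N + 3 ∧ gv (aN π) (bN π) i ≠ aN π ∧
    gv (aN π) (bN π) i ≠ bN π ∧ gv (aN π) (bN π) i ≠ N + 2 := by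
  have hab := aN_lt_bN π h3 hfix hav
  have hbb := bN_lt π hfix
  have h1 := gv_lt (N := N) hab (by omega) hi
  exact ⟨by omega, gv_ne_a hab, gv_ne_b hab, by omega⟩

lemma Rv_lt (h3 : π ^ 3 = 1) (hfix : ∀ i, π i ≠ i) (hav : Avoids231 π) {i : ℕ} (hi : i < N) : Rv π i < N := by
  have hab := aN_lt_bN π h3 hfix hav
  have hbb := bN_lt π hfix
  obtain ⟨hg1, hg2, hg3, hg4⟩ := gv_base π h3 hfix hav hi
  obtain ⟨hc1, hc2, hc3⟩ := base_closed π h3 hg1 hg2 hg3 hg4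
  exact delv_lt hab (by omega) (Q_lt π hg1) hc1 hc2 hc3

lemma gv_Rv (h3 : π ^ 3 = 1) (hfix : ∀ i, π i ≠ i) (hav : Avoids231 π) {i : ℕ} (hi : i < N) :
    gv (aN π) (bN π) (Rv π i) = Q π (gv (aN π) (bN π) i) := by
  have hab := aN_lt_bN π h3 hfix hav
  obtain ⟨hg1, hg2, hg3, hg4⟩ := gv_base π h3 hfix hav hi
  obtain ⟨hc1, hc2, hc3⟩ := base_closed π h3 hg1 hg2 hg3 hg4
  exact gv_delv hab hc1 hc2

lemma Rv_three (h3 : π ^ 3 = 1) (hfix : ∀ i, π i ≠ i) (hav : Avoids231 π) {i : ℕ} (hi : i < N) : Rv π (Rv π (Rv π i)) = i := by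
  have hab := aN_lt_bN π h3 hfix hav
  have h1 := Rv_lt π h3 hfix hav hi
  have h2 := Rv_lt π h3 hfix hav h1
  obtain ⟨hg1, hg2, hg3, hg4⟩ := gv_base π h3 hfix hav hi
  have e1 : Rv π (Rv π (Rv π i))
      = delv (aN π) (bN π) (Q π (Q π (Q π (gv (aN π) (bN π) i)))) := by
    show delv _ _ (Q π (gv _ _ (Rv π (Rv π i)))) = _
    rw [gv_Rv π h3 hfix hav h1, gv_Rv π h3 hfix hav hi]
  rw [e1, Q_three h3 hg1, delv_gv hab]

noncomputable def Rperm (h3 : π ^ 3 = 1) (hfix : ∀ i, π i ≠ i) (hav : Avoids231 π) :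
    Equiv.Perm (Fin N) :=
  Equiv.ofBijective (fun i => ⟨Rv π i.1, Rv_lt π h3 hfix hav i.2⟩)
    (by
      have hli : ∀ x : Fin N,
          (⟨Rv π (Rv π (⟨Rv π x.1, Rv_lt π h3 hfix hav x.2⟩ : Fin N).1),
            Rv_lt π h3 hfix hav (Rv_lt π h3 hfix hav (Rv_lt π h3 hfix hav x.2))⟩ : Fin N) = x :=
        fun x => Fin.ext (Rv_three π h3 hfix hav x.2)
      exact ⟨Function.LeftInverse.injective (g := fun x : Fin N =>
          ⟨Rv π (Rv π x.1), Rv_lt π h3 hfix hav (Rv_lt π h3 hfix hav x.2)⟩) (fun x => hli x),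
        Function.RightInverse.surjective (g := fun x : Fin N =>
          ⟨Rv π (Rv π x.1), Rv_lt π h3 hfix hav (Rv_lt π h3 hfix hav x.2)⟩) (fun x => hli x)⟩)

lemma Q_Rperm (h3 : π ^ 3 = 1) (hfix : ∀ i, π i ≠ i) (hav : Avoids231 π) {i : ℕ} (hi : i < N) : Q (Rperm π h3 hfix hav) i = Rv π i := by
  simp only [Q, dif_pos hi]
  rfl

lemma Rperm_pow3 (h3 : π ^ 3 = 1) (hfix : ∀ i, π i ≠ i) (hav : Avoids231 π) : (Rperm π h3 hfix hav) ^ 3 = 1 := by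
  ext x
  have hc : ∀ y : Fin N, (Rperm π h3 hfix hav) y
      = ⟨Rv π y.1, Rv_lt π h3 hfix hav y.2⟩ := fun y => rfl
  simp only [pow_succ, pow_zero, one_mul, Equiv.Perm.mul_apply, Equiv.Perm.one_apply, hc]
  exact Rv_three π h3 hfix hav x.2

lemma Rperm_fix (h3 : π ^ 3 = 1) (hfix : ∀ i, π i ≠ i) (hav : Avoids231 π) : ∀ i, (Rperm π h3 hfix hav) i ≠ i := by
  intro x hx
  have hx' : Rv π x.1 = x.1 := congrArg Fin.val hx
  have := congrArg (gv (aN π) (bN π)) hx'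
  rw [gv_Rv π h3 hfix hav x.2] at this
  obtain ⟨hg1, _, _, _⟩ := gv_base π h3 hfix hav x.2
  exact Q_ne hfix hg1 this

lemma Rperm_avoids (h3 : π ^ 3 = 1) (hfix : ∀ i, π i ≠ i) (hav : Avoids231 π) : Avoids231 (Rperm π h3 hfix hav) := by
  apply avoids_of_nat
  intro i j k hij hjk hk hki hij'
  have hab := aN_lt_bN π h3 hfix hav
  have hj : j < N := hjk.trans hk
  have hi : i < N := hij.trans hj
  rw [Q_Rperm π h3 hfix hav hi, Q_Rperm π h3 hfix hav hk] at hki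
  rw [Q_Rperm π h3 hfix hav hi, Q_Rperm π h3 hfix hav hj] at hij'
  obtain ⟨hgi, _, _, _⟩ := gv_base π h3 hfix hav hi
  obtain ⟨hgj, _, _, _⟩ := gv_base π h3 hfix hav hj
  obtain ⟨hgk, _, _, _⟩ := gv_base π h3 hfix hav hk
  refine avoids_nat hav (gv (aN π) (bN π) i) (gv (aN π) (bN π) j) (gv (aN π) (bN π) k)
    ((gv_mono_iff hab).mpr hij) ((gv_mono_iff hab).mpr hjk) hgk ?_ ?_
  · rw [← gv_Rv π h3 hfix hav hi, ← gv_Rv π h3 hfix hav hk]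
    exact (gv_mono_iff hab).mpr hki
  · rw [← gv_Rv π h3 hfix hav hi, ← gv_Rv π h3 hfix hav hj]
    exact (gv_mono_iff hab).mpr hij'

lemma condA_R (h3 : π ^ 3 = 1) (hfix : ∀ i, π i ≠ i) (hav : Avoids231 π) : CondA N (aN π) (Q (Rperm π h3 hfix hav)) := by
  intro i hi hia
  rw [Q_Rperm π h3 hfix hav hi]
  have hab := aN_lt_bN π h3 hfix hav
  have hgi : gv (aN π) (bN π) i = i := by
    simp only [gv]; rw [if_pos hia]
  have : Q π i < aN π := condA_pi π h3 hav i (by omega) hia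
  show delv (aN π) (bN π) (Q π (gv (aN π) (bN π) i)) < aN π
  rw [hgi, delv_of_lt_a this]
  exact this

lemma condB_R (h3 : π ^ 3 = 1) (hfix : ∀ i, π i ≠ i) (hav : Avoids231 π) : CondB N (bN π) (Q (Rperm π h3 hfix hav)) := by
  intro i j hij hj hbi hij'
  have hab := aN_lt_bN π h3 hfix hav
  have hi : i < N := hij.trans hj
  rw [Q_Rperm π h3 hfix hav hi] at hbi hij'
  rw [Q_Rperm π h3 hfix hav hj] at hij'
  obtain ⟨hgi, _, _, _⟩ := gv_base π h3 hfix hav hi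
  obtain ⟨hgj, _, _, hgj4⟩ := gv_base π h3 hfix hav hj
  refine avoids_nat hav (gv (aN π) (bN π) i) (gv (aN π) (bN π) j) (N + 2)
    ((gv_mono_iff hab).mpr hij) (by omega) (by omega) ?_ ?_
  · show Q π (N + 2) < Q π (gv (aN π) (bN π) i)
    rw [← gv_Rv π h3 hfix hav hi]
    show bN π < gv (aN π) (bN π) (Rv π i)
    exact (gv_gt_b_iff hab).mpr hbi
  · rw [← gv_Rv π h3 hfix hav hi, ← gv_Rv π h3 hfix hav hj]
    exact (gv_mono_iff hab).mpr hij'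

lemma gv_lt_b {a b x : ℕ} (hab : a < b) (hx : x + 2 ≤ b) : gv a b x < b := by
  simp only [gv]; split_ifs <;> omega

lemma condG_R (h3 : π ^ 3 = 1) (hfix : ∀ i, π i ≠ i) (hav : Avoids231 π) : CondG N (aN π) (bN π) (Q (Rperm π h3 hfix hav)) := by
  intro i j hij hj hjb hai hij'
  have hab := aN_lt_bN π h3 hfix hav
  have hi : i < N := hij.trans hj
  rw [Q_Rperm π h3 hfix hav hi] at hai hij'
  rw [Q_Rperm π h3 hfix hav hj] at hij'
  obtain ⟨hgi, _, _, _⟩ := gv_base π h3 hfix hav hi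
  obtain ⟨hgj, _, _, _⟩ := gv_base π h3 hfix hav hj
  refine avoids_nat hav (gv (aN π) (bN π) i) (gv (aN π) (bN π) j) (bN π)
    ((gv_mono_iff hab).mpr hij) (gv_lt_b hab hjb) (bN_lt3 π) ?_ ?_
  · show Q π (bN π) < Q π (gv (aN π) (bN π) i)
    rw [← gv_Rv π h3 hfix hav hi]
    show Q π (bN π) < gv (aN π) (bN π) (Rv π i)
    have : Q π (bN π) = aN π := rfl
    rw [this]
    exact (gv_gt_a_iff hab).mpr hai
  · rw [← gv_Rv π h3 hfix hav hi, ← gv_Rv π h3 hfix hav hj]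
    exact (gv_mono_iff hab).mpr hij'

/-- reconstruction: the extension of the removal is π itself -/
lemma Eperm_Rperm (h3 : π ^ 3 = 1) (hfix : ∀ i, π i ≠ i) (hav : Avoids231 π) :
    Eperm N (aN π) (bN π) (Rperm π h3 hfix hav) (aN_lt_bN π h3 hfix hav)
      (by have := bN_lt π hfix; omega) (Rperm_pow3 π h3 hfix hav) = π := by
  have hab := aN_lt_bN π h3 hfix hav
  apply Equiv.ext
  intro x
  apply Fin.ext
  show Fv N (aN π) (bN π) (Q (Rperm π h3 hfix hav)) x.1 = (π x).1
  have hQx : (π x).1 = Q π x.1 := by simp [Q, x.2]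
  rw [hQx]
  by_cases h1 : x.1 = aN π
  · simp only [Fv, if_pos h1]
    rw [h1, QaN π h3]
  by_cases h2 : x.1 = bN π
  · simp only [Fv, if_neg h1, if_pos h2]
    rw [h2]
    rfl
  by_cases ht : x.1 = N + 2
  · simp only [Fv, if_neg h1, if_neg h2, if_pos ht]
    rw [ht]
    rfl
  · rw [Fv_base hab h1 h2 ht]
    have hd : delv (aN π) (bN π) x.1 < N :=
      delv_lt hab (by have := bN_lt π hfix; omega) x.2 h1 h2 ht
    rw [Q_Rperm π h3 hfix hav hd]
    show gv _ _ (delv _ _ (Q π (gv (aN π) (bN π) (delv (aN π) (bN π) x.1)))) = Q π x.1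
    rw [gv_delv hab h1 h2]
    obtain ⟨hc1, hc2, hc3⟩ := base_closed π h3 x.2 h1 h2 ht
    exact gv_delv hab hc1 hc2

end Rem

/-! ### solution sets -/

section Sols

open scoped Classical in
noncomputable def Sols (n : ℕ) (q : ℕ → ℕ) : Finset (ℕ × ℕ) :=
  ((Finset.range (n + 2)) ×ˢ (Finset.range (n + 2))).filter
    (fun p => p.1 < p.2 ∧ p.2 ≤ n + 1 ∧ CondA n p.1 q ∧ CondB n p.2 q ∧ CondG n p.1 p.2 q)

lemma mem_Sols {n : ℕ} {q : ℕ → ℕ} {p : ℕ × ℕ} :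
    p ∈ Sols n q ↔ p.1 < p.2 ∧ p.2 ≤ n + 1 ∧ CondA n p.1 q ∧ CondB n p.2 q ∧
      CondG n p.1 p.2 q := by
  classical
  simp only [Sols, Finset.mem_filter, Finset.mem_product, Finset.mem_range]
  constructor
  · tauto
  · intro h
    exact ⟨⟨by omega, by omega⟩, by convert h⟩

end Sols

section SolExt

variable {N a b : ℕ} {ρ : Equiv.Perm (Fin N)}
variable (hab : a < b) (hbN : b ≤ N + 1) (h3 : ρ ^ 3 = 1)
variable (hav : Avoids231 ρ) (hfix : ∀ i, ρ i ≠ i)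

-- abbreviations for the extension values
lemma QE_a : Q (Eperm N a b ρ hab hbN h3) a = N + 2 := by
  rw [Q_Eperm hab hbN h3 (by omega)]
  simp [Fv]

lemma QE_b : Q (Eperm N a b ρ hab hbN h3) b = a := by
  rw [Q_Eperm hab hbN h3 (by omega)]
  simp only [Fv]; split_ifs <;> omega

lemma QE_t : Q (Eperm N a b ρ hab hbN h3) (N + 2) = b := by
  rw [Q_Eperm hab hbN h3 (by omega)]
  simp only [Fv]; split_ifs <;> omega

lemma QE_base {x : ℕ} (hx : x < N + 3) (h1 : x ≠ a) (h2 : x ≠ b) (ht : x ≠ N + 2) :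
    Q (Eperm N a b ρ hab hbN h3) x = gv a b (Q ρ (delv a b x)) := by
  rw [Q_Eperm hab hbN h3 hx, Fv_base hab h1 h2 ht]

/-- positions before a have values before a, in the extension -/
lemma condA_ext (hA : CondA N a (Q ρ)) : CondA (N + 3) a (Q (Eperm N a b ρ hab hbN h3)) := by
  intro i hi hia
  have h1 : i ≠ a := by omega
  have h2 : i ≠ b := by omega
  have ht : i ≠ N + 2 := by omega
  rw [QE_base hab hbN h3 hi h1 h2 ht, delv_of_lt_a hia]
  rw [gv_lt_a_iff hab]
  exact hA i (by omega) hia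

/-- base positions after a have values after a -/
lemma QE_base_gt (hA : CondA N a (Q ρ)) {x : ℕ} (hx : x < N + 3) (hxa : a < x) (h2 : x ≠ b) (ht : x ≠ N + 2) :
    a < Q (Eperm N a b ρ hab hbN h3) x := by
  rw [QE_base hab hbN h3 hx (by omega) h2 ht]
  rw [gv_gt_a_iff hab]
  by_contra hlt
  push_neg at hlt
  have hd : delv a b x < N := delv_lt hab hbN hx (by omega) h2 ht
  have := inv_lemma ρ hA _ hd (by omega)
  have := delv_ge_a hab hxa h2
  omega

lemma condB_ext (hA : CondA N a (Q ρ)) (hB : CondB N b (Q ρ)) {c : ℕ} (hc : b + 1 ≤ c) :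
    CondB (N + 3) c (Q (Eperm N a b ρ hab hbN h3)) := by
  intro i j hij hj hbi hij'
  have hi : i < N + 3 := hij.trans hj
  set π := Eperm N a b ρ hab hbN h3 with hπ
  have hbd : ∀ x, x < N + 3 → Q π x < N + 3 := fun x hx => Q_lt π hx
  by_cases hia : i = a
  · rw [hia, QE_a hab hbN h3] at hij'
    have := hbd j hj; omega
  by_cases hib : i = b
  · rw [hib, QE_b hab hbN h3] at hbi; omega
  by_cases hit : i = N + 2
  · omega
  -- i base
  have hQi : Q π i = gv a b (Q ρ (delv a b i)) := QE_base hab hbN h3 hi hia hib hit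
  have hdi : delv a b i < N := delv_lt hab hbN hi hia hib hit
  have hvi : b ≤ Q ρ (delv a b i) + 1 := by
    rw [← gv_gt_b_iff hab (v := Q ρ (delv a b i))]
    have : Q π i ≠ b := by rw [hQi]; exact gv_ne_b hab
    omega
  by_cases hja : j = a
  · have : Q π i < a := by
      rw [hQi, gv_lt_a_iff hab]
      exact hA _ (by omega) (by
        have hdi2 : delv a b i = i := delv_of_lt_a (by omega)
        omega)
    omega
  by_cases hjb : j = b
  · rw [hjb, QE_b hab hbN h3] at hij'
    omega
  by_cases hjt : j = N + 2
  · rw [hjt, QE_t hab hbN h3] at hij'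
    omega
  · have hQj : Q π j = gv a b (Q ρ (delv a b j)) := QE_base hab hbN h3 hj hja hjb hjt
    have hdj : delv a b j < N := delv_lt hab hbN hj hja hjb hjt
    refine hB (delv a b i) (delv a b j) (delv_mono hab hij hia hib hja hjb) hdj hvi ?_
    rw [← gv_mono_iff hab (a := a) (b := b)]
    omega

lemma condG_ext (hA : CondA N a (Q ρ)) (hG : CondG N a b (Q ρ)) {c : ℕ} (hc1 : b + 1 ≤ c) (hc2 : c ≤ b + 2) :
    CondG (N + 3) a c (Q (Eperm N a b ρ hab hbN h3)) := by
  intro i j hij hj hjc hai hij'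
  have hi : i < N + 3 := hij.trans hj
  set π := Eperm N a b ρ hab hbN h3 with hπ
  have hbd : ∀ x, x < N + 3 → Q π x < N + 3 := fun x hx => Q_lt π hx
  have hjbb : j ≤ b := by omega
  by_cases hia : i = a
  · rw [hia, QE_a hab hbN h3] at hij'
    have := hbd j hj; omega
  by_cases hja : j = a
  · -- i < a : value < a, contradiction with a ≤ Q π i
    have : Q π i < a := condA_ext hab hbN h3 hA i (by omega) (by omega)
    omega
  by_cases hjb : j = b
  · rw [hjb, QE_b hab hbN h3] at hij'
    omega
  by_cases hib : i = b
  · omega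
  -- i, j base, j < b
  have hit : i ≠ N + 2 := by omega
  have hjt : j ≠ N + 2 := by omega
  have hQi : Q π i = gv a b (Q ρ (delv a b i)) := QE_base hab hbN h3 hi hia hib hit
  have hQj : Q π j = gv a b (Q ρ (delv a b j)) := QE_base hab hbN h3 hj hja hjb hjt
  have hdi : delv a b i < N := delv_lt hab hbN hi hia hib hit
  have hdj : delv a b j < N := delv_lt hab hbN hj hja hjb hjt
  have hvi : a ≤ Q ρ (delv a b i) := by
    rw [← gv_gt_a_iff hab (v := Q ρ (delv a b i))]
    have : Q π i ≠ a := by rw [hQi]; exact gv_ne_a hab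
    omega
  refine hG (delv a b i) (delv a b j) (delv_mono hab hij hia hib hja hjb) hdj
    (delv_b_bound hab (by omega) hja) hvi ?_
  rw [← gv_mono_iff hab (a := a) (b := b)]
  omega

/-- the fresh conditions hold trivially -/
lemma condA_fresh {n : ℕ} (q : ℕ → ℕ) (hq : ∀ x, x < n → q x < n) : CondA n n q :=
  fun i hi _ => hq i hi

lemma condB_fresh {n : ℕ} (q : ℕ → ℕ) (hq : ∀ x, x < n → q x < n) : CondB n (n + 1) q := by
  intro i j hij hj hbi _
  have := hq i (hij.trans hj)
  omega

lemma condG_fresh {n : ℕ} (q : ℕ → ℕ) (hq : ∀ x, x < n → q x < n) : CondG n n (n + 1) q := by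
  intro i j hij hj _ hai _
  have := hq i (hij.trans hj)
  omega

/-- Backward: any solution for the extension is one of the three. -/
lemma sols_ext_subset (hA : CondA N a (Q ρ)) {a' b' : ℕ} (ha'b' : a' < b') (hb'4 : b' ≤ N + 4)
    (hA' : CondA (N + 3) a' (Q (Eperm N a b ρ hab hbN h3)))
    (hB' : CondB (N + 3) b' (Q (Eperm N a b ρ hab hbN h3)))
    (hG' : CondG (N + 3) a' b' (Q (Eperm N a b ρ hab hbN h3))) :
    (a' = a ∧ b' = b + 1) ∨ (a' = a ∧ b' = b + 2) ∨ (a' = N + 3 ∧ b' = N + 4) := by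
  set π := Eperm N a b ρ hab hbN h3 with hπ
  have hQa : Q π a = N + 2 := QE_a hab hbN h3
  have hQb : Q π b = a := QE_b hab hbN h3
  have hQt : Q π (N + 2) = b := QE_t hab hbN h3
  rcases lt_trichotomy a' a with hlt | heq | hgt
  · -- a' < a : impossible
    exfalso
    have hseg : a' ≤ Q π a' := by
      by_contra hcon
      push_neg at hcon
      have := inv_lemma π hA' a' (by omega) hcon
      omega
    have hsega : Q π a' < a := condA_ext hab hbN h3 hA a' (by omega) hlt
    by_cases hbig : a + 2 ≤ b'
    · exact hG' a' a hlt (by omega) hbig hseg (by omega)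
    · -- b' ≤ a + 1
      push_neg at hbig
      by_cases hbeq : b' = a + 1
      · exact hB' b (N + 2) (by omega) (by omega) (by omega) (by omega)
      · -- b' - 1 < a, find position of value b' - 1
        obtain ⟨p, hp, hQp⟩ := Q_surj π (w := b' - 1) (by omega)
        have hpa : p < a := inv_lemma π (condA_ext hab hbN h3 hA) p hp (by omega)
        exact hB' p a hpa (by omega) (by omega) (by omega)
  · -- a' = a : show b' ∈ {b+1, b+2}
    by_cases hsmall : b' ≤ b
    · exfalso
      obtain ⟨p, hp, hQp⟩ := Q_surj π (w := b' - 1) (by omega)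
      have hpt : p ≠ N + 2 := by
        intro h; rw [h, hQt] at hQp; omega
      exact hB' p (N + 2) (by omega) (by omega) (by omega) (by omega)
    by_cases hbig : b + 3 ≤ b'
    · exfalso
      by_cases hbtop : b + 1 = N + 2
      · exact hG' b (N + 2) (by omega) (by omega) (by omega) (by omega) (by omega)
      · have hx : a < Q π (b + 1) :=
          QE_base_gt hab hbN h3 hA (by omega) (by omega) (by omega) (by omega)
        exact hG' b (b + 1) (by omega) (by omega) (by omega) (by omega) (by omega)
    · push_neg at hsmall hbig
      omega
  · -- a < a' : forced fresh
    by_cases ha'top : a' ≤ N + 2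
    · exfalso
      have := hA' a (by omega) hgt
      omega
    · right; right
      omega

end SolExt

/-! ### the solution set of an extension -/

section SolsEq

variable {N a b : ℕ} {ρ : Equiv.Perm (Fin N)}
variable (hab : a < b) (hbN : b ≤ N + 1) (h3 : ρ ^ 3 = 1)

lemma Sols_of_Eperm (hA : CondA N a (Q ρ)) (hB : CondB N b (Q ρ)) (hG : CondG N a b (Q ρ)) :
    Sols (N + 3) (Q (Eperm N a b ρ hab hbN h3))
      = {(a, b + 1), (a, b + 2), (N + 3, N + 4)} := by
  classical
  ext p
  simp only [Finset.mem_insert, Finset.mem_singleton, mem_Sols]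
  constructor
  · rintro ⟨h1, h2, hA', hB', hG'⟩
    rcases sols_ext_subset hab hbN h3 hA h1 (by omega) hA' hB' hG' with ⟨e1, e2⟩ | ⟨e1, e2⟩ | ⟨e1, e2⟩
    · left; exact Prod.ext e1 e2
    · right; left; exact Prod.ext e1 e2
    · right; right; exact Prod.ext e1 e2
  · have hq : ∀ x, x < N + 3 → Q (Eperm N a b ρ hab hbN h3) x < N + 3 :=
      fun x hx => Q_lt _ hx
    rintro (rfl | rfl | rfl)
    · exact ⟨by omega, by omega, condA_ext hab hbN h3 hA,
        condB_ext hab hbN h3 hA hB (by omega), condG_ext hab hbN h3 hA hG (by omega) (by omega)⟩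
    · exact ⟨by omega, by omega, condA_ext hab hbN h3 hA,
        condB_ext hab hbN h3 hA hB (by omega), condG_ext hab hbN h3 hA hG (by omega) (by omega)⟩
    · exact ⟨by omega, by omega, condA_fresh _ hq, condB_fresh _ hq, condG_fresh _ hq⟩

lemma Sols_of_Eperm_card (hA : CondA N a (Q ρ)) (hB : CondB N b (Q ρ))
    (hG : CondG N a b (Q ρ)) :
    (Sols (N + 3) (Q (Eperm N a b ρ hab hbN h3))).card = 3 := by
  classical
  rw [Sols_of_Eperm hab hbN h3 hA hB hG]
  rw [Finset.card_insert_of_notMem (by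
    simp only [Finset.mem_insert, Finset.mem_singleton, Prod.mk.injEq]
    push_neg
    constructor
    · intro _; omega
    · intro h; omega)]
  rw [Finset.card_insert_of_notMem (by
    simp only [Finset.mem_singleton, Prod.mk.injEq]
    push_neg
    intro h; omega)]
  simp

end SolsEq

/-! ### recovering the data from an extension -/

section Recover

variable {N a b : ℕ} {ρ : Equiv.Perm (Fin N)}
variable (hab : a < b) (hbN : b ≤ N + 1) (h3 : ρ ^ 3 = 1)

lemma bN_Eperm : bN (Eperm N a b ρ hab hbN h3) = b := QE_t hab hbN h3

lemma aN_Eperm : aN (Eperm N a b ρ hab hbN h3) = a := by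
  show Q _ (bN _) = a
  rw [bN_Eperm hab hbN h3]
  exact QE_b hab hbN h3

lemma Rperm_Eperm (h3' : (Eperm N a b ρ hab hbN h3) ^ 3 = 1)
    (hfix' : ∀ i, (Eperm N a b ρ hab hbN h3) i ≠ i)
    (hav' : Avoids231 (Eperm N a b ρ hab hbN h3)) :
    Rperm (Eperm N a b ρ hab hbN h3) h3' hfix' hav' = ρ := by
  set π := Eperm N a b ρ hab hbN h3 with hπ
  apply Equiv.ext
  intro x
  apply Fin.ext
  show Rv π x.1 = (ρ x).1
  have hb := bN_Eperm hab hbN h3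
  have ha := aN_Eperm hab hbN h3
  show delv (aN π) (bN π) (Q π (gv (aN π) (bN π) x.1)) = (ρ x).1
  rw [ha, hb]
  have hgx : gv a b x.1 < N + 2 := gv_lt hab hbN x.2
  have hQg : Q π (gv a b x.1) = gv a b (Q ρ (delv a b (gv a b x.1))) :=
    QE_base hab hbN h3 (by omega) (gv_ne_a hab) (gv_ne_b hab) (by omega)
  rw [hQg, delv_gv hab, delv_gv hab]
  simp [Q, x.2]

end Recover

/-! ### counting -/

section Count

def Vsub (n : ℕ) := {π : Equiv.Perm (Fin n) // Avoids231 π ∧ π ^ 3 = 1 ∧ ∀ i, π i ≠ i}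

noncomputable instance (n : ℕ) : Fintype (Vsub n) := by
  classical
  exact Subtype.fintype _

/-- validity of an extension -/
lemma Eperm_mem {N a b : ℕ} {ρ : Equiv.Perm (Fin N)}
    (hv : Avoids231 ρ ∧ ρ ^ 3 = 1 ∧ ∀ i, ρ i ≠ i)
    (hm : (a, b) ∈ Sols N (Q ρ)) (hab : a < b) (hbN : b ≤ N + 1) :
    Avoids231 (Eperm N a b ρ hab hbN hv.2.1) ∧ (Eperm N a b ρ hab hbN hv.2.1) ^ 3 = 1 ∧
      ∀ i, (Eperm N a b ρ hab hbN hv.2.1) i ≠ i := by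
  obtain ⟨h1, h2, hA, hB, hG⟩ := mem_Sols.mp hm
  exact ⟨Eperm_avoids hab hbN hv.2.1 hv.1 hA hB hG, Eperm_pow3 hab hbN hv.2.1,
    Eperm_fix hab hbN hv.2.1 hv.2.2⟩

lemma sols_mem_range {N : ℕ} {ρ : Equiv.Perm (Fin N)} {p : ℕ × ℕ} (h : p ∈ Sols N (Q ρ)) :
    p.1 < p.2 ∧ p.2 ≤ N + 1 := ⟨(mem_Sols.mp h).1, (mem_Sols.mp h).2.1⟩

/-- Eperm only depends on the data -/
lemma Eperm_congr {N : ℕ} {a₁ b₁ a₂ b₂ : ℕ} {ρ₁ ρ₂ : Equiv.Perm (Fin N)}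
    (ha : a₁ = a₂) (hb : b₁ = b₂) (hρ : ρ₁ = ρ₂)
    {p1 : a₁ < b₁} {p2 : b₁ ≤ N + 1} {p3 : ρ₁ ^ 3 = 1}
    {q1 : a₂ < b₂} {q2 : b₂ ≤ N + 1} {q3 : ρ₂ ^ 3 = 1} :
    Eperm N a₁ b₁ ρ₁ p1 p2 p3 = Eperm N a₂ b₂ ρ₂ q1 q2 q3 := by
  subst ha; subst hb; subst hρ; rfl

/-- the main counting step -/
lemma card_step (N : ℕ) :
    Fintype.card (Vsub (N + 3)) = ∑ ρ : Vsub N, (Sols N (Q ρ.1)).card := by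
  classical
  have hmap : ∀ π : Vsub (N + 3),
      Avoids231 (Rperm π.1 π.2.2.1 π.2.2.2 π.2.1) ∧
      (Rperm π.1 π.2.2.1 π.2.2.2 π.2.1) ^ 3 = 1 ∧
      ∀ i, (Rperm π.1 π.2.2.1 π.2.2.2 π.2.1) i ≠ i :=
    fun π => ⟨Rperm_avoids π.1 π.2.2.1 π.2.2.2 π.2.1,
      Rperm_pow3 π.1 π.2.2.1 π.2.2.2 π.2.1, Rperm_fix π.1 π.2.2.1 π.2.2.2 π.2.1⟩
  set f : Vsub (N + 3) → Vsub N :=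
    fun π => ⟨Rperm π.1 π.2.2.1 π.2.2.2 π.2.1, hmap π⟩ with hf
  rw [← Finset.card_univ, Finset.card_eq_sum_card_fiberwise
    (f := f) (t := Finset.univ) (fun x _ => Finset.mem_univ _)]
  apply Finset.sum_congr rfl
  intro ρ _
  apply Finset.card_bij (fun π _ => (aN π.1, bN π.1))
  · -- membership
    intro π hπ
    simp only [Finset.mem_filter, Finset.mem_univ, true_and] at hπ
    have hρeq : Rperm π.1 π.2.2.1 π.2.2.2 π.2.1 = ρ.1 := congrArg Subtype.val hπ
    rw [mem_Sols]
    refine ⟨aN_lt_bN π.1 π.2.2.1 π.2.2.2 π.2.1, by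
        have := bN_lt π.1 π.2.2.2; omega, ?_, ?_, ?_⟩
    · rw [← hρeq]; exact condA_R π.1 π.2.2.1 π.2.2.2 π.2.1
    · rw [← hρeq]; exact condB_R π.1 π.2.2.1 π.2.2.2 π.2.1
    · rw [← hρeq]; exact condG_R π.1 π.2.2.1 π.2.2.2 π.2.1
  · -- injectivity
    intro π₁ h₁ π₂ h₂ heq
    simp only [Finset.mem_filter, Finset.mem_univ, true_and] at h₁ h₂
    have hρ₁ : Rperm π₁.1 π₁.2.2.1 π₁.2.2.2 π₁.2.1 = ρ.1 := congrArg Subtype.val h₁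
    have hρ₂ : Rperm π₂.1 π₂.2.2.1 π₂.2.2.2 π₂.2.1 = ρ.1 := congrArg Subtype.val h₂
    have ha : aN π₁.1 = aN π₂.1 := congrArg Prod.fst heq
    have hb : bN π₁.1 = bN π₂.1 := congrArg Prod.snd heq
    have e₁ := Eperm_Rperm π₁.1 π₁.2.2.1 π₁.2.2.2 π₁.2.1
    have e₂ := Eperm_Rperm π₂.1 π₂.2.2.1 π₂.2.2.2 π₂.2.1
    apply Subtype.ext
    rw [← e₁, ← e₂]
    exact Eperm_congr ha hb (hρ₁.trans hρ₂.symm)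
  · -- surjectivity
    rintro ⟨A, B⟩ hSab
    obtain ⟨hab, hbN, hA, hB, hG⟩ := mem_Sols.mp hSab
    simp only at hab hbN hA hB hG
    have hbN' : B ≤ N + 1 := hbN
    set E := Eperm N A B ρ.1 hab hbN' ρ.2.2.1 with hE
    have hEmem := Eperm_mem ρ.2 hSab hab hbN'
    refine ⟨⟨E, hEmem⟩, ?_, ?_⟩
    · refine Finset.mem_filter.mpr ⟨Finset.mem_univ _, ?_⟩
      apply Subtype.ext
      exact Rperm_Eperm hab hbN' ρ.2.2.1 hEmem.2.1 hEmem.2.2 hEmem.1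
    · show (aN E, bN E) = (A, B)
      rw [aN_Eperm hab hbN' ρ.2.2.1, bN_Eperm hab hbN' ρ.2.2.1]

/-- solution sets of valid permutations have exactly 3 elements (size ≥ 3) -/
lemma sols_card_valid {N : ℕ} (π : Equiv.Perm (Fin (N + 3)))
    (h3 : π ^ 3 = 1) (hfix : ∀ i, π i ≠ i) (hav : Avoids231 π) :
    (Sols (N + 3) (Q π)).card = 3 := by
  have e := Eperm_Rperm π h3 hfix hav
  have hA := condA_R π h3 hfix hav
  have hB := condB_R π h3 hfix hav
  have hG := condG_R π h3 hfix hav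
  rw [← e]
  exact Sols_of_Eperm_card (aN_lt_bN π h3 hfix hav) _ _ hA hB hG

lemma card_vsub_zero : Fintype.card (Vsub 0) = 1 := by
  classical
  rw [Fintype.card_eq_one_iff]
  refine ⟨⟨1, ?_, one_pow 3, fun i => i.elim0⟩, ?_⟩
  · rintro ⟨i, _⟩; exact i.elim0
  · intro y
    apply Subtype.ext
    apply Equiv.ext
    intro x
    exact x.elim0

lemma sols_zero (ρ : Equiv.Perm (Fin 0)) : Sols 0 (Q ρ) = {(0, 1)} := by
  classical
  ext p
  rw [mem_Sols]
  simp only [Finset.mem_singleton]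
  constructor
  · rintro ⟨h1, h2, _, _, _⟩
    have : p.1 = 0 ∧ p.2 = 1 := by omega
    exact Prod.ext this.1 this.2
  · rintro rfl
    exact ⟨by omega, by omega, fun i hi _ => absurd hi (by omega),
      fun i j hij hj _ _ => absurd hj (by omega), fun i j hij hj _ _ _ => absurd hj (by omega)⟩

lemma card_vsub (m : ℕ) : Fintype.card (Vsub (3 * m + 3)) = 3 ^ m := by
  induction m with
  | zero =>
    have h := card_step 0
    simp only [Nat.mul_zero, Nat.zero_add] at *
    rw [h]
    have : ∀ ρ : Vsub 0, (Sols 0 (Q ρ.1)).card = 1 := fun ρ => by rw [sols_zero]; simp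
    rw [Finset.sum_congr rfl (fun ρ _ => this ρ)]
    simp [card_vsub_zero]
  | succ m ih =>
    have hidx : 3 * (m + 1) + 3 = (3 * m + 3) + 3 := by ring
    rw [hidx, card_step (3 * m + 3)]
    have hterm : ∀ ρ : Vsub (3 * m + 3), (Sols (3 * m + 3) (Q ρ.1)).card = 3 :=
      fun ρ => sols_card_valid ρ.1 ρ.2.2.1 ρ.2.2.2 ρ.2.1
    rw [Finset.sum_congr rfl (fun ρ _ => hterm ρ)]
    rw [Finset.sum_const, Finset.card_univ, ih]
    rw [pow_succ]
    ring

/-- emptiness when 3 does not divide n -/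
lemma vsub_empty (n : ℕ) (hn : ¬ (3 ∣ n)) : IsEmpty (Vsub n) := by
  induction n using Nat.strong_induction_on with
  | _ n ih =>
    constructor
    rintro ⟨π, hav, h3, hfix⟩
    match n, hn, π, hav, h3, hfix with
    | 0, hn, _, _, _, _ => exact hn ⟨0, rfl⟩
    | 1, hn, π, hav, h3, hfix =>
      exact hfix 0 (Subsingleton.elim _ _)
    | 2, hn, π, hav, h3, hfix =>
      have h2 : π ^ 2 = 1 := by
        have hcard : Fintype.card (Equiv.Perm (Fin 2)) = 2 := by
          simp [Fintype.card_perm]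
        have := pow_card_eq_one (G := Equiv.Perm (Fin 2)) (x := π)
        rwa [hcard] at this
      have : π = 1 := by
        have h3' : π ^ 2 * π = 1 := by rw [← pow_succ]; exact h3
        rw [h2, one_mul] at h3'
        exact h3'
      exact hfix 0 (by rw [this]; rfl)
    | (K + 3), hn, π, hav, h3, hfix =>
      have hK : ¬ (3 ∣ K) := by
        intro ⟨c, hc⟩
        exact hn ⟨c + 1, by omega⟩
      have hemp := ih K (by omega) hK
      exact hemp.false ⟨Rperm π h3 hfix hav,
        Rperm_avoids π h3 hfix hav, Rperm_pow3 π h3 hfix hav, Rperm_fix π h3 hfix hav⟩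

end Count

end C231

theorem count_231_avoiding_all_three_cycles (n : ℕ) :
    (¬ (3 ∣ n) → Nat.card {π : Equiv.Perm (Fin n) //
        Avoids231 π ∧ π ^ 3 = 1 ∧ ∀ i, π i ≠ i} = 0) ∧
    (3 ∣ n → 3 ≤ n → Nat.card {π : Equiv.Perm (Fin n) //
        Avoids231 π ∧ π ^ 3 = 1 ∧ ∀ i, π i ≠ i} = 3 ^ (n / 3 - 1)) := by
  constructor
  · intro hn
    have := C231.vsub_empty n hn
    exact @Nat.card_of_isEmpty _ this
  · intro hdvd hge
    obtain ⟨m, hm⟩ := hdvd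
    have hm1 : 1 ≤ m := by omega
    have hidx : n = 3 * (m - 1) + 3 := by omega
    have hcard : Nat.card (C231.Vsub n) = 3 ^ (m - 1) := by
      rw [Nat.card_eq_fintype_card, hidx]
      exact C231.card_vsub (m - 1)
    have hdiv : n / 3 = m := by omega
    rw [hdiv]
    exact hcard
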